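/- Let p be a prime, let M ∈ F_p[q] be a nonzero polynomial of degree at least 1, and let q̄ denote the image of q in the quotient ring K = F_p[q]/⟨M⟩. Then the index of q̄ in the multiplicative monoid of K equals val(M); that is, val(M) is the least integer i ≥ 0 for which there exists an integer k ≥ 1 with q̄^{i+k} = q̄^i. Here val(M) denotes the largest integer ℓ such that q^ℓ divides M. -/

import Mathlib

open Polynomial

lemma exists_pow_X_eq_one (p : ℕ) [Fact p.Prime] (N : Polynomial (ZMod p))
    (hN : N ≠ 0) (hX : ¬ (X : Polynomial (ZMod p)) ∣ N) :
    ∃ k : ℕ, 1 ≤ k ∧ N ∣ X ^ k - 1 := by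
  have hco : IsCoprime (X : Polynomial (ZMod p)) N :=
    (Polynomial.irreducible_X).coprime_iff_not_dvd.2 hX
  obtain ⟨a, b, hab⟩ := hco
  -- X is a unit in AdjoinRoot N
  have hmul : AdjoinRoot.mk N a * AdjoinRoot.mk N X = 1 := by
    have := congrArg (AdjoinRoot.mk N) hab
    simpa [map_add, map_mul, AdjoinRoot.mk_self, map_one] using this
  have hu : IsUnit (AdjoinRoot.mk N X) := IsUnit.of_mul_eq_one _ (by
    rw [mul_comm]; exact hmul)
  obtain ⟨u, hu⟩ := hu
  haveI : Module.Finite (ZMod p) (AdjoinRoot N) :=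
    Module.Finite.of_basis (AdjoinRoot.powerBasis hN).basis
  haveI : Finite (AdjoinRoot N) := Module.finite_of_finite (ZMod p)
  haveI : Finite (AdjoinRoot N)ˣ := Finite.of_injective _ Units.val_injective
  refine ⟨orderOf u, orderOf_pos u, ?_⟩
  have hpow : (AdjoinRoot.mk N X) ^ orderOf u = 1 := by
    rw [← hu, ← Units.val_pow_eq_pow_val, pow_orderOf_eq_one, Units.val_one]
  have : AdjoinRoot.mk N (X ^ orderOf u - 1) = 0 := by
    rw [map_sub, map_pow, map_one, hpow, sub_self]
  exact AdjoinRoot.mk_eq_zero.1 this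

/-- Let `M ∈ F_p[q]` be nonzero of degree at least 1 and let `q̄` be the image
of `q` in `K = F_p[q]/⟨M⟩`. Then `val(M)` — the largest `ℓ` with `q^ℓ ∣ M`,
here `M.natTrailingDegree`, as asserted by the first conjunct — is the least
`i ≥ 0` such that `q̄^{i+k} = q̄^i` for some `k ≥ 1`, i.e., it is the index of
`q̄` in the multiplicative monoid of `K`. -/
theorem index_of_q_eq_valuation (p : ℕ) [Fact p.Prime]
    (M : Polynomial (ZMod p)) (hM : M ≠ 0) (hdeg : 1 ≤ M.natDegree) :
    IsGreatest {ℓ : ℕ | Polynomial.X ^ ℓ ∣ M} M.natTrailingDegree ∧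
    IsLeast {i : ℕ | ∃ k : ℕ, 1 ≤ k ∧
        (Ideal.Quotient.mk (Ideal.span {M}) (Polynomial.X : Polynomial (ZMod p))) ^ (i + k) =
          (Ideal.Quotient.mk (Ideal.span {M}) (Polynomial.X : Polynomial (ZMod p))) ^ i}
      M.natTrailingDegree := by
  set ℓ := M.natTrailingDegree with hℓ
  have hdvd : (X : Polynomial (ZMod p)) ^ ℓ ∣ M := by
    rw [X_pow_dvd_iff]
    intro d hd
    exact coeff_eq_zero_of_lt_natTrailingDegree hd
  obtain ⟨N, hMN⟩ := hdvd
  have hN : N ≠ 0 := by rintro rfl; simp at hMN; exact hM hMN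
  have hXpow : (X : Polynomial (ZMod p)) ^ ℓ ≠ 0 := pow_ne_zero _ X_ne_zero
  have htd : ℓ = ℓ + N.natTrailingDegree := by
    conv_lhs => rw [hℓ, hMN, natTrailingDegree_mul hXpow hN, natTrailingDegree_X_pow]
  have hN0 : N.natTrailingDegree = 0 := by omega
  have hNc : N.coeff 0 ≠ 0 := by
    have := Polynomial.trailingCoeff_nonzero_iff_nonzero.2 hN
    rwa [trailingCoeff, hN0] at this
  have hXN : ¬ (X : Polynomial (ZMod p)) ∣ N := by
    rw [X_dvd_iff]; exact hNc
  -- key divisibility criterion in the quotient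
  have key : ∀ a b : Polynomial (ZMod p),
      (Ideal.Quotient.mk (Ideal.span {M}) a = Ideal.Quotient.mk (Ideal.span {M}) b)
        ↔ M ∣ a - b := by
    intro a b
    rw [Ideal.Quotient.eq, Ideal.mem_span_singleton]
  constructor
  · constructor
    · rw [Set.mem_setOf_eq, hMN]; exact Dvd.intro _ rfl
    · intro m hm
      rw [Set.mem_setOf_eq] at hm
      obtain ⟨c, hc⟩ := hm
      have hc' : c ≠ 0 := by rintro rfl; simp at hc; exact hM hc
      have := hc ▸ (natTrailingDegree_mul (pow_ne_zero _ (X_ne_zero (R := ZMod p))) hc')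
      rw [natTrailingDegree_X_pow] at this
      omega
  · constructor
    · obtain ⟨k, hk1, hkdvd⟩ := exists_pow_X_eq_one p N hN hXN
      refine ⟨k, hk1, ?_⟩
      rw [← map_pow, ← map_pow, key]
      have : (X : Polynomial (ZMod p)) ^ (ℓ + k) - X ^ ℓ = X ^ ℓ * (X ^ k - 1) := by
        ring
      rw [this, hMN]
      exact mul_dvd_mul_left _ hkdvd
    · intro i hi
      obtain ⟨k, hk1, he⟩ := hi
      rw [← map_pow, ← map_pow, key] at he
      have hfac : (X : Polynomial (ZMod p)) ^ (i + k) - X ^ i = X ^ i * (X ^ k - 1) := by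
        ring
      rw [hfac] at he
      have hc0 : ((X : Polynomial (ZMod p)) ^ k - 1).coeff 0 ≠ 0 := by
        rw [coeff_sub, coeff_X_pow, coeff_one]
        have hk0 : ¬ (0 = k) := by omega
        simp [hk0]
      have hne : ((X : Polynomial (ZMod p)) ^ k - 1) ≠ 0 := fun h => by simp [h] at hc0
      have hprod : ((X : Polynomial (ZMod p)) ^ i * (X ^ k - 1)) ≠ 0 :=
        mul_ne_zero (pow_ne_zero _ X_ne_zero) hne
      obtain ⟨c, hc⟩ := he
      have hc' : c ≠ 0 := by rintro rfl; rw [mul_zero] at hc; exact hprod hc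
      have := natTrailingDegree_mul hM hc'
      rw [← hc, natTrailingDegree_mul (pow_ne_zero _ (X_ne_zero (R := ZMod p))) hne,
        natTrailingDegree_X_pow] at this
      have h0 : ((X : Polynomial (ZMod p)) ^ k - 1).natTrailingDegree = 0 :=
        natTrailingDegree_eq_zero.2 (Or.inr hc0)
      omega
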